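/- Let N be a positive integer, d : Fin N → ℝ with 0 ≤ d_j < 1 for all j, and f : ℝ → ℝ a function with 0 ≤ f(x) < 1 for all x ∈ [0,1). Then the vector (1/√N) · Σ_j e_j ⊗ (f(d_j) · f_0 + √(1 − f(d_j)²) · f_1) in (EuclideanSpace ℂ (Fin N)) ⊗ ℂ² is a unit vector, the squared norm of its f_0-ancilla component equals (1/N) · Σ_j f(d_j)², and if Σ_j f(d_j)² > 0 the normalized f_0-component equals (Σ_j f(d_j)²)^{−1/2} · Σ_j f(d_j) · e_j ⊗ f_0. (This is the success probability and output state of the generalized QDAC of Corollary 1.1.) -/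

import Mathlib

open scoped BigOperators

noncomputable section

/-- Concrete realization of the Hilbert-space tensor product of two Euclidean spaces:
`(tp x y) (i, k) = x i * y k`.  The `L²` inner product on `EuclideanSpace ℂ (ι × κ)` is
exactly the induced inner product `⟪a ⊗ b, c ⊗ d⟫ = ⟪a, c⟫ * ⟪b, d⟫`. -/
def tp {ι κ : Type*} [Fintype ι] [Fintype κ]
    (x : EuclideanSpace ℂ ι) (y : EuclideanSpace ℂ κ) : EuclideanSpace ℂ (ι × κ) :=
  (WithLp.equiv 2 ((ι × κ) → ℂ)).symm fun p => x p.1 * y p.2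

/-- The standard orthonormal basis vector `e_j` of `EuclideanSpace ℂ (Fin N)`. -/
def e {N : ℕ} (j : Fin N) : EuclideanSpace ℂ (Fin N) := EuclideanSpace.single j 1

/-- The standard orthonormal basis vector `f_b` of `ℂ² = EuclideanSpace ℂ (Fin 2)`. -/
def f (b : Fin 2) : EuclideanSpace ℂ (Fin 2) := EuclideanSpace.single b 1

lemma sum_tp_apply {N : ℕ} (w : Fin N → EuclideanSpace ℂ (Fin 2)) (p : Fin N × Fin 2) :
    (∑ j, tp (e j) (w j)) p = w p.1 p.2 := by
  have : (∑ j, tp (e j) (w j)) p = ∑ j, tp (e j) (w j) p :=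
    by rw [WithLp.ofLp_sum, Finset.sum_apply]
  rw [this]
  simp [tp, e, EuclideanSpace.single_apply, PiLp.toLp_apply]

lemma sum_smul_tp_apply {N : ℕ} (c : Fin N → ℂ) (p : Fin N × Fin 2) :
    (∑ j, c j • tp (e j) (f 0)) p = c p.1 * f 0 p.2 := by
  have h : (∑ j, c j • tp (e j) (f 0)) = ∑ j, tp (e j) (c j • f 0) := by
    refine Finset.sum_congr rfl fun j _ => ?_
    apply PiLp.ext; intro q
    show c j * (e j q.1 * f 0 q.2) = e j q.1 * (c j * f 0 q.2)
    ring
  rw [h, sum_tp_apply]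
  simp

/-- **Generalized QDAC (Corollary 1.1).**  For data `0 ≤ d_j < 1` and a function
`f : ℝ → ℝ` with `0 ≤ f(x) < 1` on `[0,1)`, the state
`(1/√N) Σ_j e_j ⊗ (f(d_j) f₀ + √(1 - f(d_j)²) f₁)` is a unit vector, the squared norm of
its `f₀`-ancilla component equals `(1/N) Σ_j f(d_j)²`, and whenever `Σ_j f(d_j)² > 0` the
normalized `f₀`-component equals `(Σ_j f(d_j)²)^(-1/2) Σ_j f(d_j) e_j ⊗ f₀`. -/
theorem generalized_qdac (N : ℕ) (hN : 0 < N) (d : Fin N → ℝ)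
    (hd : ∀ j, 0 ≤ d j ∧ d j < 1) (g : ℝ → ℝ)
    (hg : ∀ x ∈ Set.Ico (0 : ℝ) 1, 0 ≤ g x ∧ g x < 1) :
    ‖((1 / Real.sqrt N : ℝ) : ℂ) • ∑ j : Fin N,
        tp (e j) ((g (d j) : ℂ) • f 0 + ((Real.sqrt (1 - g (d j) ^ 2) : ℝ) : ℂ) • f 1)‖ = 1 ∧
    ‖((1 / Real.sqrt N : ℝ) : ℂ) • ∑ j : Fin N, (g (d j) : ℂ) • tp (e j) (f 0)‖ ^ 2
      = (1 / N) * ∑ j : Fin N, g (d j) ^ 2 ∧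
    (0 < ∑ j : Fin N, g (d j) ^ 2 →
      ‖((1 / Real.sqrt N : ℝ) : ℂ) • ∑ j : Fin N, (g (d j) : ℂ) • tp (e j) (f 0)‖⁻¹ •
          (((1 / Real.sqrt N : ℝ) : ℂ) • ∑ j : Fin N, (g (d j) : ℂ) • tp (e j) (f 0))
        = (((∑ j : Fin N, g (d j) ^ 2) ^ (-(1 / 2) : ℝ) : ℝ) : ℂ) •
            ∑ j : Fin N, (g (d j) : ℂ) • tp (e j) (f 0)) := by
  have ha : ∀ j, 0 ≤ g (d j) ∧ g (d j) < 1 := fun j => hg (d j) ⟨(hd j).1, (hd j).2⟩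
  have hNpos : (0 : ℝ) < N := by exact_mod_cast hN
  have hsN : (0 : ℝ) < Real.sqrt N := Real.sqrt_pos.mpr hNpos
  set S : ℝ := ∑ j : Fin N, g (d j) ^ 2 with hS
  have hSnn : 0 ≤ S := Finset.sum_nonneg fun j _ => sq_nonneg _
  -- norm of the full state vector (unscaled)
  have hx : ‖∑ j : Fin N,
      tp (e j) ((g (d j) : ℂ) • f 0 + ((Real.sqrt (1 - g (d j) ^ 2) : ℝ) : ℂ) • f 1)‖
      = Real.sqrt N := by
    rw [EuclideanSpace.norm_eq]
    congr 1
    rw [Fintype.sum_prod_type]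
    have : ∀ (i : Fin N) (k : Fin 2),
        ‖(∑ j : Fin N, tp (e j)
          ((g (d j) : ℂ) • f 0 + ((Real.sqrt (1 - g (d j) ^ 2) : ℝ) : ℂ) • f 1)) (i, k)‖ ^ 2
        = ‖((g (d i) : ℂ) • f 0 + ((Real.sqrt (1 - g (d i) ^ 2) : ℝ) : ℂ) • f 1) k‖ ^ 2 := by
      intro i k
      rw [sum_tp_apply (fun j => (g (d j) : ℂ) • f 0 + ((Real.sqrt (1 - g (d j) ^ 2) : ℝ) : ℂ) • f 1) (i,k)]
    simp only [this]
    have hterm : ∀ i : Fin N, (∑ k : Fin 2,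
        ‖((g (d i) : ℂ) • f 0 + ((Real.sqrt (1 - g (d i) ^ 2) : ℝ) : ℂ) • f 1) k‖ ^ 2) = 1 := by
      intro i
      rw [Fin.sum_univ_two]
      have h0 : ((g (d i) : ℂ) • f 0 + ((Real.sqrt (1 - g (d i) ^ 2) : ℝ) : ℂ) • f 1) 0
          = (g (d i) : ℂ) := by simp [f, EuclideanSpace.single_apply]
      have h1 : ((g (d i) : ℂ) • f 0 + ((Real.sqrt (1 - g (d i) ^ 2) : ℝ) : ℂ) • f 1) 1
          = ((Real.sqrt (1 - g (d i) ^ 2) : ℝ) : ℂ) := by simp [f, EuclideanSpace.single_apply]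
      rw [h0, h1, Complex.norm_real, Complex.norm_real, Real.norm_eq_abs, Real.norm_eq_abs]
      have h1a : 0 ≤ 1 - g (d i) ^ 2 := by nlinarith [(ha i).1, (ha i).2]
      rw [abs_of_nonneg (ha i).1, abs_of_nonneg (Real.sqrt_nonneg _), Real.sq_sqrt h1a]
      ring
    simp only [hterm]
    simp
  -- norm of the unscaled f0-component
  have hy : ‖∑ j : Fin N, (g (d j) : ℂ) • tp (e j) (f 0)‖ = Real.sqrt S := by
    rw [EuclideanSpace.norm_eq]
    congr 1
    rw [Fintype.sum_prod_type]
    have : ∀ (i : Fin N) (k : Fin 2),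
        ‖(∑ j : Fin N, (g (d j) : ℂ) • tp (e j) (f 0)) (i, k)‖ ^ 2
        = ‖(g (d i) : ℂ) * f 0 k‖ ^ 2 := by
      intro i k
      rw [sum_smul_tp_apply (fun j => (g (d j) : ℂ)) (i, k)]
    simp only [this]
    have hterm : ∀ i : Fin N, (∑ k : Fin 2, ‖(g (d i) : ℂ) * f 0 k‖ ^ 2) = g (d i) ^ 2 := by
      intro i
      rw [Fin.sum_univ_two]
      simp [f, EuclideanSpace.single_apply, Complex.norm_real, Real.norm_eq_abs,
        abs_of_nonneg (ha i).1]
    simp only [hterm]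
    exact hS.symm
  have hnc : ‖((1 / Real.sqrt N : ℝ) : ℂ)‖ = 1 / Real.sqrt N := by
    rw [Complex.norm_real, Real.norm_eq_abs, abs_of_nonneg (by positivity)]
  refine ⟨?_, ?_, ?_⟩
  · rw [norm_smul, hx, hnc]
    field_simp
  · rw [norm_smul, hy, hnc]
    rw [mul_pow, div_pow, one_pow, Real.sq_sqrt hNpos.le, Real.sq_sqrt hSnn]
  · intro hSpos
    have hsS : (0:ℝ) < Real.sqrt S := Real.sqrt_pos.mpr hSpos
    rw [norm_smul, hy, hnc, ← smul_assoc]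
    congr 1
    rw [Complex.real_smul]
    norm_cast
    rw [Real.rpow_neg hSnn, ← Real.sqrt_eq_rpow]
    field_simp
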